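/- Let F = Σ_{i=0}^n L_iX_i^m with L_i = a_iY_0 + b_iY_1, a_i,b_i ∈ k*, and consider the (n+3)×(n+3) matrix M with rows: row 0 = (F_0, 0, ma_0Y_0X_0^{m-1}, …, ma_nY_0X_n^{m-1}), row 1 = (0, F_1, mb_0Y_1X_0^{m-1}, …, mb_nY_1X_n^{m-1}), and row i+2 = (ma_iX_i^m, mb_iX_i^m, 0, …, m²L_iX_i^{m-1}, …, 0) with m²L_iX_i^{m-1} in column i+2, for 0 ≤ i ≤ n, where F_0 = Σa_iX_i^m, F_1 = Σb_iX_i^m. Then det(M_{0|1}) = −m^{2(n+1)}·Y_1·(∏_{i=0}^n L_iX_i^{m-1})·Σ_{i=0}^n (a_ib_iX_i^m)/L_i, as an identity of rational functions (equivalently, after clearing the denominators L_i, an identity of polynomials). -/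

import Mathlib

open MvPolynomial

lemma aux_bordered_det {K : Type*} [Field K] {α : Type*} [Fintype α] [DecidableEq α]
    (c d e : α → K) (he : ∀ i, e i ≠ 0) :
    (Matrix.fromBlocks (0 : Matrix Unit Unit K) (Matrix.of fun _ j => c j)
      (Matrix.of fun i _ => d i) (Matrix.diagonal e)).det
    = -∑ j, c j * d j * ∏ i ∈ ({j}ᶜ : Finset α), e i := by
  haveI : Invertible (Matrix.diagonal e) :=
    (Matrix.diagonal e).invertibleOfIsUnitDet (by
      simp only [Matrix.det_diagonal]
      exact (Finset.prod_ne_zero_iff.2 fun i _ => he i).isUnit)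
  have hinv : ⅟ (Matrix.diagonal e) = Matrix.diagonal (fun i => (e i)⁻¹) := by
    apply invOf_eq_right_inv
    rw [Matrix.diagonal_mul_diagonal]
    simp [mul_inv_cancel₀, he, Matrix.diagonal_one]
  rw [Matrix.det_fromBlocks₂₂, hinv]
  rw [Matrix.det_diagonal, Matrix.det_unique]
  simp only [Matrix.sub_apply, Matrix.zero_apply, Matrix.mul_apply, Matrix.diagonal_apply,
    Matrix.mul_diagonal, Matrix.of_apply, zero_sub]
  rw [mul_neg, neg_inj, Finset.mul_sum]
  refine Finset.sum_congr rfl fun j _ => ?_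
  rw [← Finset.prod_mul_prod_compl {j} e, Finset.prod_singleton]
  simp only [mul_ite, mul_zero, Finset.sum_ite_eq', Finset.mem_univ, if_true]
  field_simp [he j]

/-- The minor `det(M_{0|1})` of the Jacobian-type matrix for the pencil
`F = Σ L_iX_i^m` of generalized Fermat hypersurfaces equals
`−m^{2(n+1)}·Y_1·(∏ L_iX_i^{m-1})·Σ_i a_ib_iX_i^m/L_i`; after clearing the denominators
`L_i` this is the polynomial identity stated below.  Here the minor (row `0` and column `1`
of `M` removed) is the explicit matrix `B` indexed by `Unit ⊕ Fin (n+1)`. -/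
theorem fermat_pencil_minor_det
    {k : Type*} [Field k] (n m : ℕ) (hm : 2 ≤ m) (hmk : (m : k) ≠ 0)
    (a b : Fin (n + 1) → k) (ha : ∀ i, a i ≠ 0) (hb : ∀ i, b i ≠ 0)
    (L : Fin (n + 1) → MvPolynomial (Fin 2 ⊕ Fin (n + 1)) k)
    (hL : ∀ i, L i = C (a i) * X (Sum.inl 0) + C (b i) * X (Sum.inl 1))
    (B : Matrix (Unit ⊕ Fin (n + 1)) (Unit ⊕ Fin (n + 1))
      (MvPolynomial (Fin 2 ⊕ Fin (n + 1)) k))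
    (hB00 : ∀ u v : Unit, B (Sum.inl u) (Sum.inl v) = 0)
    (hB0j : ∀ (u : Unit) (j : Fin (n + 1)), B (Sum.inl u) (Sum.inr j) =
      C ((m : k) * b j) * X (Sum.inl 1) * X (Sum.inr j) ^ (m - 1))
    (hBi0 : ∀ (i : Fin (n + 1)) (u : Unit), B (Sum.inr i) (Sum.inl u) =
      C ((m : k) * a i) * X (Sum.inr i) ^ m)
    (hBij : ∀ i j : Fin (n + 1), B (Sum.inr i) (Sum.inr j) =
      if i = j then C ((m : k) ^ 2) * L i * X (Sum.inr i) ^ (m - 1) else 0) :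
    B.det = - (C ((m : k) ^ (2 * (n + 1))) * X (Sum.inl 1) *
      (∏ i, X (Sum.inr i) ^ (m - 1)) *
      ∑ i, C (a i * b i) * X (Sum.inr i) ^ m * ∏ j ∈ ({i}ᶜ : Finset (Fin (n + 1))), L j) := by
  classical
  let R := MvPolynomial (Fin 2 ⊕ Fin (n + 1)) k
  let c : Fin (n + 1) → R := fun j => C ((m : k) * b j) * X (Sum.inl 1) * X (Sum.inr j) ^ (m - 1)
  let d : Fin (n + 1) → R := fun i => C ((m : k) * a i) * X (Sum.inr i) ^ m
  let e : Fin (n + 1) → R := fun i => C ((m : k) ^ 2) * L i * X (Sum.inr i) ^ (m - 1)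
  have hLne : ∀ i, L i ≠ 0 := by
    intro i h
    apply ha i
    have h2 := congrArg (eval (fun v => if v = Sum.inl 0 then (1 : k) else 0)) h
    rw [hL i] at h2
    simpa using h2
  have hene : ∀ i, e i ≠ 0 := fun i =>
    mul_ne_zero (mul_ne_zero
      (by rw [Ne, MvPolynomial.C_eq_zero]; exact pow_ne_zero 2 hmk) (hLne i))
      (pow_ne_zero _ (MvPolynomial.X_ne_zero _))
  have hB : B = Matrix.fromBlocks 0 (Matrix.of fun _ j => c j)
      (Matrix.of fun i _ => d i) (Matrix.diagonal e) := by
    ext i j : 2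
    rcases i with i | i <;> rcases j with j | j <;>
      simp [hB00, hB0j, hBi0, hBij, Matrix.diagonal, c, d, e]
  have hdet : B.det = -∑ j, c j * d j * ∏ i ∈ ({j}ᶜ : Finset (Fin (n + 1))), e i := by
    set K := FractionRing R
    have hinj : Function.Injective (algebraMap R K) := IsFractionRing.injective R K
    apply hinj
    set φ := algebraMap R K with hφ
    rw [hB, RingHom.map_det]
    have hmap : (Matrix.fromBlocks (0 : Matrix Unit Unit R) (Matrix.of fun _ j => c j)
        (Matrix.of fun i _ => d i) (Matrix.diagonal e)).map φ
        = Matrix.fromBlocks (0 : Matrix Unit Unit K) (Matrix.of fun (_ : Unit) j => φ (c j))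
          (Matrix.of fun i (_ : Unit) => φ (d i)) (Matrix.diagonal fun i => φ (e i)) := by
      ext i j : 2
      rcases i with i | i <;> rcases j with j | j <;>
        simp [Matrix.map_apply, Matrix.diagonal, apply_ite φ]
    rw [RingHom.mapMatrix_apply, hmap, aux_bordered_det _ _ _ (fun i => (map_ne_zero_iff φ hinj).mpr (hene i))]
    simp [map_sum, map_mul, map_prod]
  rw [hdet]
  rw [Finset.mul_sum, neg_inj]
  refine Finset.sum_congr rfl fun j _ => ?_
  simp only [c, d, e]
  rw [Finset.prod_mul_distrib, Finset.prod_mul_distrib, Finset.prod_const]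
  have hcard : ({j}ᶜ : Finset (Fin (n + 1))).card = n := by
    simp [Finset.card_compl]
  rw [hcard]
  have hX : (∏ i, (X (Sum.inr i) : R) ^ (m - 1))
      = X (Sum.inr j) ^ (m - 1) * ∏ i ∈ ({j}ᶜ : Finset (Fin (n + 1))), X (Sum.inr i) ^ (m - 1) := by
    rw [← Finset.prod_mul_prod_compl {j}, Finset.prod_singleton]
  rw [hX]
  simp only [map_mul, map_pow]
  ring
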